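/- arXiv:2006.09422 — 3 statements merged into one kernel-verified Lean document; each statement's English description precedes it below -/
import Mathlib

section
/- Let W and W′ be graphons and H a graph with e(H) edges. Then |t(H,W) − t(H,W′)| ≤ e(H) · d_□(W,W′), where d_□ is the cut distance. -/
open MeasureTheory

noncomputable section

/-- The Lebesgue measure restricted to `[0,1]`. -/
abbrev muI : Measure ℝ := volume.restrict (Set.Icc 0 1)

/-- A graphon: a symmetric measurable function `[0,1]² → [0,1]`
(represented as a function on `ℝ²`). -/
def IsGraphon (W : ℝ → ℝ → ℝ) : Prop :=
  Measurable (Function.uncurry W) ∧ (∀ x y, W x y = W y x) ∧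
    (∀ x y, W x y ∈ Set.Icc (0:ℝ) 1)

/-- The edges of a graph on `Fin m`, each listed once as an ordered pair. -/
def edgeFinset' {m : ℕ} (G : SimpleGraph (Fin m)) [DecidableRel G.Adj] :
    Finset (Fin m × Fin m) :=
  Finset.univ.filter fun p => p.1 < p.2 ∧ G.Adj p.1 p.2

/-- The number of edges of `G`. -/
def edgeCount {m : ℕ} (G : SimpleGraph (Fin m)) [DecidableRel G.Adj] : ℕ :=
  (edgeFinset' G).card

/-- The homomorphism density `t(G, W)`. -/
def homDensity {m : ℕ} (G : SimpleGraph (Fin m)) [DecidableRel G.Adj]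
    (W : ℝ → ℝ → ℝ) : ℝ :=
  ∫ x : Fin m → ℝ, ∏ p ∈ edgeFinset' G, W (x p.1) (x p.2)
    ∂(Measure.pi fun _ => muI)

/-- The single-edge graph `K₂`. -/
abbrev K2 : SimpleGraph (Fin 2) := ⊤

/-- The complete bipartite graph `K_{a,b}` on `Fin (a+b)`. -/
def bip (a b : ℕ) : SimpleGraph (Fin (a + b)) where
  Adj i j := (decide (i.val < a)) ≠ (decide (j.val < a))
  symm := ⟨fun _ _ h => h.symm⟩
  loopless := ⟨fun _ h => h rfl⟩

instance (a b : ℕ) : DecidableRel (bip a b).Adj :=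
  fun i j => inferInstanceAs (Decidable (_ ≠ _))

/-- The cycle `C_n` on `Fin n` (for `n ≥ 3`). -/
def cyc (n : ℕ) : SimpleGraph (Fin n) where
  Adj i j := i ≠ j ∧ ((i.val + 1) % n = j.val ∨ (j.val + 1) % n = i.val)
  symm := ⟨fun _ _ h => ⟨h.1.symm, h.2.symm⟩⟩
  loopless := ⟨fun _ h => h.1 rfl⟩

instance (n : ℕ) : DecidableRel (cyc n).Adj :=
  fun i j => inferInstanceAs (Decidable (_ ∧ _))

/-- The cut norm `‖U‖_□` of a kernel (over `[0,1]²`). -/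
def cutNorm (U : ℝ → ℝ → ℝ) : ℝ :=
  sSup {r : ℝ | ∃ S T : Set ℝ, MeasurableSet S ∧ MeasurableSet T ∧
    r = |∫ x in Set.Icc (0:ℝ) 1 ∩ S, ∫ y in Set.Icc (0:ℝ) 1 ∩ T, U x y|}

/-- The cut distance `d_□(W,W')`: infimum of `‖W^φ − W'‖_□` over measure
preserving maps `φ` of `[0,1]`. -/
def cutDist (W W' : ℝ → ℝ → ℝ) : ℝ :=
  sInf {r : ℝ | ∃ φ : ℝ → ℝ, MeasurePreserving φ muI muI ∧
    r = cutNorm (fun x y => W (φ x) (φ y) - W' x y)}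

section AuxCountingLemma

open Function Set

instance : IsProbabilityMeasure muI := ⟨by simp [Real.volume_Icc]⟩

/-- Integrable from measurable and bounded by 1 on a finite measure. -/
lemma integrable_of_abs_le_one {α : Type*} [MeasurableSpace α] {μ : Measure α}
    [IsFiniteMeasure μ] {f : α → ℝ} (hm : AEStronglyMeasurable f μ)
    (hb : ∀ x, |f x| ≤ 1) : Integrable f μ :=
  (integrable_const (1:ℝ)).mono' hm (Filter.Eventually.of_forall fun x => by
    simpa [Real.norm_eq_abs] using hb x)

lemma abs_setIntegral_le_one {U : ℝ → ℝ → ℝ} (hUb : ∀ x y, |U x y| ≤ 1)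
    {S T : Set ℝ} (hS : MeasurableSet S) (hT : MeasurableSet T) :
    |∫ x in Set.Icc (0:ℝ) 1 ∩ S, ∫ y in Set.Icc (0:ℝ) 1 ∩ T, U x y| ≤ 1 := by
  have hIle : ∀ A : Set ℝ, (volume (Set.Icc (0:ℝ) 1 ∩ A)).toReal ≤ 1 := by
    intro A
    have h1 : volume (Set.Icc (0:ℝ) 1 ∩ A) ≤ 1 := by
      refine le_trans (measure_mono Set.inter_subset_left) ?_
      simp [Real.volume_Icc]
    exact ENNReal.toReal_le_of_le_ofReal one_pos.le (by simpa using h1)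
  have hfin : ∀ A : Set ℝ, volume (Set.Icc (0:ℝ) 1 ∩ A) < ⊤ := by
    intro A
    exact lt_of_le_of_lt (measure_mono Set.inter_subset_left) (by simp [Real.volume_Icc])
  have hin : ∀ x, ‖∫ y in Set.Icc (0:ℝ) 1 ∩ T, U x y‖ ≤ 1 := by
    intro x
    calc ‖∫ y in Set.Icc (0:ℝ) 1 ∩ T, U x y‖
        ≤ 1 * (volume (Set.Icc (0:ℝ) 1 ∩ T)).toReal :=
          norm_setIntegral_le_of_norm_le_const_ae' (hfin T)
            (Filter.Eventually.of_forall fun y _ => by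
              simpa [Real.norm_eq_abs] using hUb x y)
      _ ≤ 1 := by rw [one_mul]; exact hIle T
  calc |∫ x in Set.Icc (0:ℝ) 1 ∩ S, ∫ y in Set.Icc (0:ℝ) 1 ∩ T, U x y|
      ≤ 1 * (volume (Set.Icc (0:ℝ) 1 ∩ S)).toReal := by
        rw [← Real.norm_eq_abs]
        exact norm_setIntegral_le_of_norm_le_const_ae' (hfin S)
          (Filter.Eventually.of_forall fun x _ => hin x)
    _ ≤ 1 := by rw [one_mul]; exact hIle S

lemma cutNorm_bddAbove {U : ℝ → ℝ → ℝ} (hUb : ∀ x y, |U x y| ≤ 1) :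
    BddAbove {r : ℝ | ∃ S T : Set ℝ, MeasurableSet S ∧ MeasurableSet T ∧
      r = |∫ x in Set.Icc (0:ℝ) 1 ∩ S, ∫ y in Set.Icc (0:ℝ) 1 ∩ T, U x y|} := by
  refine ⟨1, ?_⟩
  rintro r ⟨S, T, hS, hT, rfl⟩
  exact abs_setIntegral_le_one hUb hS hT

lemma le_cutNorm {U : ℝ → ℝ → ℝ} (hUb : ∀ x y, |U x y| ≤ 1)
    {S T : Set ℝ} (hS : MeasurableSet S) (hT : MeasurableSet T) :
    |∫ x in Set.Icc (0:ℝ) 1 ∩ S, ∫ y in Set.Icc (0:ℝ) 1 ∩ T, U x y| ≤ cutNorm U :=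
  le_csSup (cutNorm_bddAbove hUb) ⟨S, T, hS, hT, rfl⟩

lemma cutNorm_nonneg {U : ℝ → ℝ → ℝ} (hUb : ∀ x y, |U x y| ≤ 1) :
    0 ≤ cutNorm U := by
  have h := le_cutNorm hUb MeasurableSet.empty MeasurableSet.empty
  simpa using le_trans (abs_nonneg _) h

lemma integral_step {c : ℝ} (hc : c ∈ Set.Icc (0:ℝ) 1) :
    ∫ s, (if s < c then (1:ℝ) else 0) ∂muI = c := by
  have : (fun s => if s < c then (1:ℝ) else 0)
      = Set.indicator (Set.Iio c) (fun _ => (1:ℝ)) := by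
    funext s; simp [Set.indicator_apply, Set.mem_Iio]
  rw [this, MeasureTheory.integral_indicator_const _ measurableSet_Iio]
  have hset : Set.Iio c ∩ Set.Icc (0:ℝ) 1 = Set.Ico 0 c := by
    ext x
    simp only [Set.mem_inter_iff, Set.mem_Iio, Set.mem_Icc, Set.mem_Ico]
    constructor
    · rintro ⟨h1, h2, h3⟩; exact ⟨h2, h1⟩
    · rintro ⟨h1, h2⟩; exact ⟨h2, h1, le_trans h2.le hc.2⟩
  simp only [muI, Measure.restrict_apply measurableSet_Iio, hset, Real.volume_Ico,
    smul_eq_mul, mul_one, sub_zero]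
  rw [Measure.real, Measure.restrict_apply measurableSet_Iio, hset, Real.volume_Ico, sub_zero]
  exact ENNReal.toReal_ofReal hc.1

lemma bilin_le_cutNorm {U : ℝ → ℝ → ℝ} (hU : Measurable (Function.uncurry U))
    (hUb : ∀ x y, |U x y| ≤ 1) {f g : ℝ → ℝ} (hf : Measurable f)
    (hf01 : ∀ x, f x ∈ Set.Icc (0:ℝ) 1) (hg : Measurable g)
    (hg01 : ∀ x, g x ∈ Set.Icc (0:ℝ) 1) :
    |∫ s, ∫ t, U s t * (f s * g t) ∂muI ∂muI| ≤ cutNorm U := by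
  set ν := muI.prod muI with hν
  have hUm : Measurable (fun p : ℝ × ℝ => U p.1 p.2) := hU
  -- the kernel as indicator integrand
  set h : (ℝ × ℝ) → (ℝ × ℝ) → ℝ := fun p q =>
    U p.1 p.2 * ((if q.1 < f p.1 then (1:ℝ) else 0) * (if q.2 < g p.2 then (1:ℝ) else 0))
    with hh
  have hhm : Measurable (Function.uncurry h) := by
    apply Measurable.mul
    · exact hUm.comp measurable_fst
    · apply Measurable.mul
      · refine Measurable.ite ?_ measurable_const measurable_const
        exact measurableSet_lt (measurable_fst.comp measurable_snd)
          (hf.comp (measurable_fst.comp measurable_fst))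
      · refine Measurable.ite ?_ measurable_const measurable_const
        exact measurableSet_lt (measurable_snd.comp measurable_snd)
          (hg.comp (measurable_snd.comp measurable_fst))
  have hhb : ∀ r : (ℝ × ℝ) × (ℝ × ℝ), |Function.uncurry h r| ≤ 1 := by
    rintro ⟨p, q⟩
    simp only [Function.uncurry, hh]
    rw [abs_mul]
    have h2 : |(if q.1 < f p.1 then (1:ℝ) else 0) * (if q.2 < g p.2 then (1:ℝ) else 0)| ≤ 1 := by
      rw [abs_mul]
      have a1 : |(if q.1 < f p.1 then (1:ℝ) else 0)| ≤ 1 := by split <;> simp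
      have a2 : |(if q.2 < g p.2 then (1:ℝ) else 0)| ≤ 1 := by split <;> simp
      calc _ ≤ 1 * 1 := mul_le_mul a1 a2 (abs_nonneg _) zero_le_one
        _ = 1 := one_mul 1
    calc _ ≤ 1 * 1 := mul_le_mul (hUb p.1 p.2) h2 (abs_nonneg _) zero_le_one
      _ = 1 := one_mul 1
  -- step 1 : iterated to product
  have hint1 : Integrable (fun p : ℝ × ℝ => U p.1 p.2 * (f p.1 * g p.2)) ν := by
    refine integrable_of_abs_le_one ?_ ?_
    · exact (hUm.mul ((hf.comp measurable_fst).mul (hg.comp measurable_snd))).aestronglyMeasurable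
    · intro p
      rw [abs_mul]
      have h2 : |f p.1 * g p.2| ≤ 1 := by
        rw [abs_mul]
        have a1 : |f p.1| ≤ 1 := abs_le.mpr ⟨by linarith [(hf01 p.1).1], (hf01 p.1).2⟩
        have a2 : |g p.2| ≤ 1 := abs_le.mpr ⟨by linarith [(hg01 p.2).1], (hg01 p.2).2⟩
        calc _ ≤ 1 * 1 := mul_le_mul a1 a2 (abs_nonneg _) zero_le_one
          _ = 1 := one_mul 1
      calc _ ≤ 1 * 1 := mul_le_mul (hUb p.1 p.2) h2 (abs_nonneg _) zero_le_one
        _ = 1 := one_mul 1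
  have step1 : ∫ s, ∫ t, U s t * (f s * g t) ∂muI ∂muI
      = ∫ p, U p.1 p.2 * (f p.1 * g p.2) ∂ν :=
    (integral_prod _ hint1).symm
  -- step 2 : layer-cake the f,g factors
  have step2 : ∀ p : ℝ × ℝ, U p.1 p.2 * (f p.1 * g p.2) = ∫ q, h p q ∂ν := by
    intro p
    have hkey : f p.1 * g p.2
        = ∫ q : ℝ × ℝ, (if q.1 < f p.1 then (1:ℝ) else 0) * (if q.2 < g p.2 then (1:ℝ) else 0) ∂ν := by
      calc f p.1 * g p.2
          = (∫ s, (if s < f p.1 then (1:ℝ) else 0) ∂muI)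
            * ∫ t, (if t < g p.2 then (1:ℝ) else 0) ∂muI := by
            rw [integral_step (hf01 p.1), integral_step (hg01 p.2)]
        _ = ∫ q : ℝ × ℝ, (if q.1 < f p.1 then (1:ℝ) else 0)
            * (if q.2 < g p.2 then (1:ℝ) else 0) ∂ν := (integral_prod_mul _ _).symm
    rw [hkey, ← integral_const_mul]
  have hinth : Integrable (Function.uncurry h) (ν.prod ν) :=
    integrable_of_abs_le_one hhm.aestronglyMeasurable hhb
  have step3 : ∫ p, ∫ q, h p q ∂ν ∂ν = ∫ q, ∫ p, h p q ∂ν ∂ν :=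
    integral_integral_swap hinth
  -- step 4 : for each q the inner integral is a cut-norm quantity
  have step4 : ∀ q : ℝ × ℝ, |∫ p, h p q ∂ν| ≤ cutNorm U := by
    intro q
    set S : Set ℝ := {x | q.1 < f x} with hSdef
    set T : Set ℝ := {y | q.2 < g y} with hTdef
    have hS : MeasurableSet S := measurableSet_lt measurable_const hf
    have hT : MeasurableSet T := measurableSet_lt measurable_const hg
    have hind : (fun p : ℝ × ℝ => h p q)
        = Set.indicator (S ×ˢ T) (fun p : ℝ × ℝ => U p.1 p.2) := by
      funext p
      by_cases h1 : q.1 < f p.1 <;> by_cases h2 : q.2 < g p.2 <;>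
        simp [hh, Set.indicator_apply, Set.mem_prod, hSdef, hTdef, h1, h2]
    have hcalc : ∫ p, h p q ∂ν
        = ∫ x in Set.Icc (0:ℝ) 1 ∩ S, ∫ y in Set.Icc (0:ℝ) 1 ∩ T, U x y := by
      rw [hind, integral_indicator (hS.prod hT), hν, ← Measure.prod_restrict]
      have hrS : muI.restrict S = volume.restrict (Set.Icc (0:ℝ) 1 ∩ S) := by
        rw [Measure.restrict_restrict hS, Set.inter_comm]
      have hrT : muI.restrict T = volume.restrict (Set.Icc (0:ℝ) 1 ∩ T) := by
        rw [Measure.restrict_restrict hT, Set.inter_comm]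
      rw [integral_prod, hrS]
      · exact integral_congr_ae (Filter.Eventually.of_forall fun x => by rw [hrT])
      · refine integrable_of_abs_le_one ?_ (fun p => hUb p.1 p.2)
        exact hUm.aestronglyMeasurable
    rw [hcalc]
    exact le_cutNorm hUb hS hT
  -- assemble
  rw [step1, integral_congr_ae (Filter.Eventually.of_forall step2), step3, ← Real.norm_eq_abs]
  calc ‖∫ q, ∫ p, h p q ∂ν ∂ν‖ ≤ cutNorm U * (ν Set.univ).toReal :=
      norm_integral_le_of_norm_le_const (Filter.Eventually.of_forall fun q => by
        rw [Real.norm_eq_abs]; exact step4 q)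
    _ = cutNorm U := by simp

section PiPart

variable {m : ℕ}

def piM (m : ℕ) : Measure (Fin m → ℝ) := Measure.pi fun _ => muI

instance : IsProbabilityMeasure (piM m) := by
  unfold piM; infer_instance

lemma measurePreserving_update_pi (a : Fin m) :
    MeasurePreserving (fun p : (Fin m → ℝ) × ℝ => Function.update p.1 a p.2)
      ((piM m).prod muI) (piM m) := by
  constructor
  · exact measurable_update'
  · refine (Measure.pi_eq fun s hs => ?_).symm
    rw [Measure.map_apply measurable_update' (MeasurableSet.univ_pi hs)]
    have hpre : (fun p : (Fin m → ℝ) × ℝ => Function.update p.1 a p.2) ⁻¹' Set.pi Set.univ s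
        = (Set.pi Set.univ (Function.update s a Set.univ)) ×ˢ (s a) := by
      ext ⟨x, t⟩
      simp only [Set.mem_preimage, Set.mem_pi, Set.mem_univ, forall_true_left, Set.mem_prod]
      constructor
      · intro h
        refine ⟨fun i => ?_, by simpa using h a⟩
        by_cases hi : i = a
        · subst hi; simp
        · rw [Function.update_of_ne hi]
          simpa [Function.update_of_ne hi] using h i
      · rintro ⟨h1, h2⟩ i
        by_cases hi : i = a
        · subst hi; simpa using h2
        · have := h1 i
          rw [Function.update_of_ne hi] at this
          simpa [Function.update_of_ne hi] using this
    rw [hpre, Measure.prod_prod]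
    simp only [piM]
    rw [Measure.pi_pi]
    have hupd : ∀ i, muI (Function.update s a Set.univ i)
        = Function.update (fun i => muI (s i)) a (muI Set.univ) i := by
      intro i; by_cases hi : i = a
      · subst hi; simp
      · simp [Function.update_of_ne hi]
    rw [Finset.prod_congr rfl (fun i _ => hupd i),
      Finset.prod_update_of_mem (Finset.mem_univ a)]
    rw [measure_univ, one_mul, mul_comm,
      ← Finset.mul_prod_erase Finset.univ (fun i => muI (s i)) (Finset.mem_univ a)]
    rw [Finset.sdiff_singleton_eq_erase]

lemma integral_update2 (a b : Fin m) {F : (Fin m → ℝ) → ℝ} (hFm : Measurable F)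
    (hFb : ∀ x, |F x| ≤ 1) :
    ∫ x, F x ∂piM m
      = ∫ x, ∫ s, ∫ t, F (Function.update (Function.update x a s) b t) ∂muI ∂muI ∂piM m := by
  have hΨ : MeasurePreserving
      (fun r : ((Fin m → ℝ) × ℝ) × ℝ =>
        Function.update (Function.update r.1.1 a r.1.2) b r.2)
      (((piM m).prod muI).prod muI) (piM m) :=
    (measurePreserving_update_pi b).comp
      ((measurePreserving_update_pi a).prod (MeasurePreserving.id muI))
  have hΨm := hΨ.measurable
  have step1 : ∫ x, F x ∂piM m
      = ∫ r : ((Fin m → ℝ) × ℝ) × ℝ,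
          F (Function.update (Function.update r.1.1 a r.1.2) b r.2)
          ∂(((piM m).prod muI).prod muI) := by
    conv_lhs => rw [← hΨ.map_eq]
    rw [integral_map hΨm.aemeasurable hFm.aestronglyMeasurable]
  rw [step1]
  have hint1 : Integrable
      (fun r : ((Fin m → ℝ) × ℝ) × ℝ =>
        F (Function.update (Function.update r.1.1 a r.1.2) b r.2))
      (((piM m).prod muI).prod muI) :=
    integrable_of_abs_le_one (hFm.comp hΨm).aestronglyMeasurable (fun r => hFb _)
  rw [integral_prod _ hint1]
  have hGm : Measurable (fun p : (Fin m → ℝ) × ℝ =>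
      ∫ t, F (Function.update (Function.update p.1 a p.2) b t) ∂muI) := by
    have : StronglyMeasurable (fun r : ((Fin m → ℝ) × ℝ) × ℝ =>
        F (Function.update (Function.update r.1.1 a r.1.2) b r.2)) :=
      (hFm.comp hΨm).stronglyMeasurable
    exact this.integral_prod_right'.measurable
  have hGb : ∀ p : (Fin m → ℝ) × ℝ,
      |∫ t, F (Function.update (Function.update p.1 a p.2) b t) ∂muI| ≤ 1 := by
    intro p
    rw [← Real.norm_eq_abs]
    calc ‖∫ t, F (Function.update (Function.update p.1 a p.2) b t) ∂muI‖
        ≤ 1 * (muI Set.univ).toReal := norm_integral_le_of_norm_le_const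
          (Filter.Eventually.of_forall fun t => by
            rw [Real.norm_eq_abs]; exact hFb _)
      _ = 1 := by simp
  have hint2 : Integrable (fun p : (Fin m → ℝ) × ℝ =>
      ∫ t, F (Function.update (Function.update p.1 a p.2) b t) ∂muI)
      ((piM m).prod muI) :=
    integrable_of_abs_le_one hGm.aestronglyMeasurable hGb
  rw [integral_prod _ hint2]

end PiPart

lemma measurable_pair_apply {m : ℕ} {Z : ℝ → ℝ → ℝ}
    (hZ : Measurable (Function.uncurry Z)) (u v : Fin m) :
    Measurable (fun x : Fin m → ℝ => Z (x u) (x v)) :=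
  hZ.comp' (f := fun x : Fin m → ℝ => (x u, x v))
    ((measurable_pi_apply u).prodMk (measurable_pi_apply v))

lemma counting_cutNorm {m : ℕ} (H : SimpleGraph (Fin m)) [DecidableRel H.Adj]
    (V V' : ℝ → ℝ → ℝ) (hV : IsGraphon V) (hV' : IsGraphon V') :
    |(∫ x, ∏ p ∈ edgeFinset' H, V (x p.1) (x p.2) ∂piM m)
      - ∫ x, ∏ p ∈ edgeFinset' H, V' (x p.1) (x p.2) ∂piM m|
      ≤ ((edgeFinset' H).card : ℝ)
        * cutNorm (fun x y => V x y - V' x y) := by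
  set E := edgeFinset' H with hEdef
  set U : ℝ → ℝ → ℝ := fun x y => V x y - V' x y with hUdef
  have hUm : Measurable (Function.uncurry U) := hV.1.sub hV'.1
  have hUb : ∀ x y, |U x y| ≤ 1 := by
    intro x y
    have h1 := hV.2.2 x y
    have h2 := hV'.2.2 x y
    simp only [Set.mem_Icc] at h1 h2
    rw [abs_le]
    constructor <;> simp only [hUdef] <;> linarith [h1.1, h1.2, h2.1, h2.2]
  set cn := cutNorm U with hcndef
  have hcn0 : 0 ≤ cn := cutNorm_nonneg hUb
  -- hybrid products
  set PF : Finset (Fin m × Fin m) → Finset (Fin m × Fin m) → (Fin m → ℝ) → ℝ :=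
    fun D A x => ∏ p ∈ D, (if p ∈ A then V' else V) (x p.1) (x p.2) with hPFdef
  have hPFm : ∀ D A, Measurable (PF D A) := by
    intro D A
    apply Finset.measurable_prod
    intro p _
    have hZ : Measurable (Function.uncurry (if p ∈ A then V' else V)) := by
      by_cases hpA : p ∈ A
      · rw [if_pos hpA]; exact hV'.1
      · rw [if_neg hpA]; exact hV.1
    exact measurable_pair_apply hZ p.1 p.2
  have hfac01 : ∀ (A : Finset (Fin m × Fin m)) (p : Fin m × Fin m) (u v : ℝ),
      (if p ∈ A then V' else V) u v ∈ Set.Icc (0:ℝ) 1 := by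
    intro A p u v
    by_cases hpA : p ∈ A
    · simp only [hpA, if_true]; exact hV'.2.2 u v
    · simp only [hpA, if_false]; exact hV.2.2 u v
  have hPF01 : ∀ D A x, PF D A x ∈ Set.Icc (0:ℝ) 1 := by
    intro D A x
    constructor
    · exact Finset.prod_nonneg fun p _ => (hfac01 A p _ _).1
    · exact Finset.prod_le_one (fun p _ => (hfac01 A p _ _).1)
        (fun p _ => (hfac01 A p _ _).2)
  have hPFb : ∀ D A x, |PF D A x| ≤ 1 := by
    intro D A x
    have h := hPF01 D A x
    rw [abs_le]; exact ⟨by linarith [h.1], h.2⟩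
  have hPFint : ∀ D A, Integrable (PF D A) (piM m) := fun D A =>
    integrable_of_abs_le_one (hPFm D A).aestronglyMeasurable (hPFb D A)
  -- the key single-edge swap
  have step : ∀ q ∈ E, ∀ A : Finset (Fin m × Fin m), q ∉ A →
      |(∫ x, PF E A x ∂piM m) - ∫ x, PF E (insert q A) x ∂piM m| ≤ cn := by
    intro q hq A hqA
    have hqlt : q.1 < q.2 := (Finset.mem_filter.mp hq).2.1
    set a := q.1 with hadef
    set b := q.2 with hbdef
    have hab : a ≠ b := ne_of_lt hqlt
    -- pointwise splitting
    have hsplit : ∀ x, PF E A x - PF E (insert q A) x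
        = U (x a) (x b) * PF (E.erase q) A x := by
      intro x
      have e1 : PF E A x = (if q ∈ A then V' else V) (x a) (x b) * PF (E.erase q) A x :=
        (Finset.mul_prod_erase E _ hq).symm
      have e2 : PF E (insert q A) x
          = (if q ∈ insert q A then V' else V) (x a) (x b)
            * PF (E.erase q) (insert q A) x :=
        (Finset.mul_prod_erase E _ hq).symm
      have e3 : PF (E.erase q) (insert q A) x = PF (E.erase q) A x := by
        refine Finset.prod_congr rfl fun p hp => ?_
        have hpq : p ≠ q := Finset.ne_of_mem_erase hp
        have : (if p ∈ insert q A then V' else V) = (if p ∈ A then V' else V) := by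
          simp [Finset.mem_insert, hpq]
        rw [this]
      rw [e1, e2, e3, if_neg hqA, if_pos (Finset.mem_insert_self q A)]
      simp only [hUdef]
      ring
    set F : (Fin m → ℝ) → ℝ := fun x => U (x a) (x b) * PF (E.erase q) A x with hFdef
    have hFm : Measurable F :=
      (measurable_pair_apply hUm a b).mul (hPFm (E.erase q) A)
    have hFb : ∀ x, |F x| ≤ 1 := by
      intro x
      simp only [hFdef]
      rw [abs_mul]
      calc _ ≤ 1 * 1 := mul_le_mul (hUb _ _) (hPFb _ _ _) (abs_nonneg _) zero_le_one
        _ = (1:ℝ) := one_mul 1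
    have hdiff : (∫ x, PF E A x ∂piM m) - ∫ x, PF E (insert q A) x ∂piM m
        = ∫ x, F x ∂piM m := by
      rw [← integral_sub (hPFint E A) (hPFint E (insert q A))]
      exact integral_congr_ae (Filter.Eventually.of_forall hsplit)
    rw [hdiff, integral_update2 a b hFm hFb]
    -- the three edge classes
    set Ea := (E.erase q).filter (fun p => p.1 = a ∨ p.2 = a) with hEadef
    set Eb := (E.erase q).filter
      (fun p => ¬(p.1 = a ∨ p.2 = a) ∧ (p.1 = b ∨ p.2 = b)) with hEbdef
    set Ec := (E.erase q).filter
      (fun p => ¬(p.1 = a ∨ p.2 = a) ∧ ¬(p.1 = b ∨ p.2 = b)) with hEcdef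
    -- pointwise factorization of the inner integrand
    have hFy : ∀ (x : Fin m → ℝ) (s t : ℝ),
        F (Function.update (Function.update x a s) b t)
        = PF Ec A x * (U s t
            * (PF Ea A (Function.update x a s) * PF Eb A (Function.update x b t))) := by
      intro x s t
      set y := Function.update (Function.update x a s) b t with hydef
      have hya : y a = s := by
        rw [hydef, Function.update_of_ne hab, Function.update_self]
      have hyb : y b = t := by rw [hydef, Function.update_self]
      have hy_nb : ∀ i, i ≠ b → y i = Function.update x a s i := by
        intro i hib
        rw [hydef, Function.update_of_ne hib]
      have hy_na : ∀ i, i ≠ a → y i = Function.update x b t i := by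
        intro i hia
        by_cases hib : i = b
        · subst hib; rw [hyb, Function.update_self]
        · rw [hydef, Function.update_of_ne hib, Function.update_of_ne hia,
            Function.update_of_ne hib]
      have hy_nab : ∀ i, i ≠ a → i ≠ b → y i = x i := by
        intro i hia hib
        rw [hydef, Function.update_of_ne hib, Function.update_of_ne hia]
      -- splitting the product over E.erase q
      have hprodsplit : PF (E.erase q) A y = PF Ea A y * (PF Eb A y * PF Ec A y) := by
        simp only [hPFdef, hEadef, hEbdef, hEcdef]
        rw [← Finset.prod_filter_mul_prod_filter_not (E.erase q)
          (fun p => p.1 = a ∨ p.2 = a)]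
        congr 1
        rw [← Finset.prod_filter_mul_prod_filter_not
          ((E.erase q).filter (fun p => ¬(p.1 = a ∨ p.2 = a)))
          (fun p => p.1 = b ∨ p.2 = b), Finset.filter_filter, Finset.filter_filter]
      -- each class only sees the relevant coordinates
      have h1 : PF Ea A y = PF Ea A (Function.update x a s) := by
        refine Finset.prod_congr rfl fun p hp => ?_
        obtain ⟨hpE, hpa⟩ := Finset.mem_filter.mp hp
        have hpE' : p ∈ E := Finset.mem_of_mem_erase hpE
        have hpq : p ≠ q := Finset.ne_of_mem_erase hpE
        have hplt : p.1 < p.2 := (Finset.mem_filter.mp hpE').2.1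
        have hnb : p.1 ≠ b ∧ p.2 ≠ b := by
          rcases hpa with h | h
          · constructor
            · rw [h]; exact hab
            · intro hc
              exact hpq (Prod.ext (h.trans hadef) (hc.trans hbdef))
          · constructor
            · intro hc
              rw [hc, h] at hplt
              exact absurd hqlt (not_lt.mpr hplt.le)
            · rw [h]; exact hab
        rw [hy_nb p.1 hnb.1, hy_nb p.2 hnb.2]
      have h2 : PF Eb A y = PF Eb A (Function.update x b t) := by
        refine Finset.prod_congr rfl fun p hp => ?_
        obtain ⟨hpE, hpcond⟩ := Finset.mem_filter.mp hp
        have hna : p.1 ≠ a ∧ p.2 ≠ a := by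
          constructor
          · intro hc; exact hpcond.1 (Or.inl hc)
          · intro hc; exact hpcond.1 (Or.inr hc)
        rw [hy_na p.1 hna.1, hy_na p.2 hna.2]
      have h3 : PF Ec A y = PF Ec A x := by
        refine Finset.prod_congr rfl fun p hp => ?_
        obtain ⟨hpE, hpcond⟩ := Finset.mem_filter.mp hp
        have hna : p.1 ≠ a ∧ p.2 ≠ a :=
          ⟨fun hc => hpcond.1 (Or.inl hc), fun hc => hpcond.1 (Or.inr hc)⟩
        have hnb : p.1 ≠ b ∧ p.2 ≠ b :=
          ⟨fun hc => hpcond.2 (Or.inl hc), fun hc => hpcond.2 (Or.inr hc)⟩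
        rw [hy_nab p.1 hna.1 hnb.1, hy_nab p.2 hna.2 hnb.2]
      calc F y = U (y a) (y b) * PF (E.erase q) A y := rfl
        _ = U s t * (PF Ea A (Function.update x a s)
              * (PF Eb A (Function.update x b t) * PF Ec A x)) := by
            rw [hya, hyb, hprodsplit, h1, h2, h3]
        _ = PF Ec A x * (U s t
              * (PF Ea A (Function.update x a s) * PF Eb A (Function.update x b t))) := by
            ring
    -- bound the double integral for each x
    have hinner : ∀ x : Fin m → ℝ,
        |∫ s, ∫ t, F (Function.update (Function.update x a s) b t) ∂muI ∂muI| ≤ cn := by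
      intro x
      have hrw : ∫ s, ∫ t, F (Function.update (Function.update x a s) b t) ∂muI ∂muI
          = PF Ec A x * ∫ s, ∫ t,
              (U s t * (PF Ea A (Function.update x a s)
                * PF Eb A (Function.update x b t))) ∂muI ∂muI := by
        rw [← integral_const_mul]
        refine integral_congr_ae (Filter.Eventually.of_forall fun s => ?_)
        dsimp only
        rw [← integral_const_mul]
        exact integral_congr_ae (Filter.Eventually.of_forall fun t => hFy x s t)
      rw [hrw, abs_mul]
      have hbil : |∫ s, ∫ t, (U s t * (PF Ea A (Function.update x a s)
          * PF Eb A (Function.update x b t))) ∂muI ∂muI| ≤ cn := by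
        refine bilin_le_cutNorm hUm hUb ?_ ?_ ?_ ?_
        · exact (hPFm Ea A).comp (measurable_update x)
        · exact fun s => hPF01 Ea A _
        · exact (hPFm Eb A).comp (measurable_update x)
        · exact fun t => hPF01 Eb A _
      calc |PF Ec A x| * |∫ s, ∫ t, (U s t * (PF Ea A (Function.update x a s)
            * PF Eb A (Function.update x b t))) ∂muI ∂muI|
          ≤ 1 * cn := mul_le_mul (hPFb Ec A x) hbil (abs_nonneg _) zero_le_one
        _ = cn := one_mul cn
    rw [← Real.norm_eq_abs]
    calc ‖∫ x, ∫ s, ∫ t, F (Function.update (Function.update x a s) b t) ∂muI ∂muI ∂piM m‖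
        ≤ cn * ((piM m) Set.univ).toReal := norm_integral_le_of_norm_le_const
          (Filter.Eventually.of_forall fun x => by
            rw [Real.norm_eq_abs]; exact hinner x)
      _ = cn := by simp
  -- telescoping
  have tele : ∀ A : Finset (Fin m × Fin m), A ⊆ E →
      |(∫ x, PF E ∅ x ∂piM m) - ∫ x, PF E A x ∂piM m| ≤ (A.card : ℝ) * cn := by
    intro A
    induction A using Finset.induction_on with
    | empty => intro _; simp
    | @insert q A' hqA' ih =>
      intro hsub
      have hqE : q ∈ E := hsub (Finset.mem_insert_self q A')
      have hA'E : A' ⊆ E := fun p hp => hsub (Finset.mem_insert_of_mem hp)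
      have h1 := ih hA'E
      have h2 := step q hqE A' hqA'
      rw [Finset.card_insert_of_notMem hqA']
      push_cast
      calc |(∫ x, PF E ∅ x ∂piM m) - ∫ x, PF E (insert q A') x ∂piM m|
          ≤ |(∫ x, PF E ∅ x ∂piM m) - ∫ x, PF E A' x ∂piM m|
            + |(∫ x, PF E A' x ∂piM m) - ∫ x, PF E (insert q A') x ∂piM m| := by
            exact abs_sub_le _ _ _
        _ ≤ (A'.card : ℝ) * cn + cn := add_le_add h1 h2
        _ = ((A'.card : ℝ) + 1) * cn := by ring
  have hVempty : (∫ x, ∏ p ∈ E, V (x p.1) (x p.2) ∂piM m) = ∫ x, PF E ∅ x ∂piM m := by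
    refine integral_congr_ae (Filter.Eventually.of_forall fun x => ?_)
    exact Finset.prod_congr rfl fun p _ => by simp [hPFdef]
  have hVfull : (∫ x, ∏ p ∈ E, V' (x p.1) (x p.2) ∂piM m) = ∫ x, PF E E x ∂piM m := by
    refine integral_congr_ae (Filter.Eventually.of_forall fun x => ?_)
    exact Finset.prod_congr rfl fun p hp => by simp [hPFdef, hp]
  rw [hVempty, hVfull]
  exact tele E le_rfl

lemma prod_comp_invariance {m : ℕ} (E : Finset (Fin m × Fin m)) (V : ℝ → ℝ → ℝ)
    (hVm : Measurable (Function.uncurry V)) (hVb : ∀ x y, |V x y| ≤ 1)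
    {φ : ℝ → ℝ} (hφ : MeasurePreserving φ muI muI) :
    ∫ x, ∏ p ∈ E, V (φ (x p.1)) (φ (x p.2)) ∂piM m
      = ∫ x, ∏ p ∈ E, V (x p.1) (x p.2) ∂piM m := by
  have hπ : MeasurePreserving (fun (x : Fin m → ℝ) (i : Fin m) => φ (x i))
      (piM m) (piM m) := measurePreserving_pi _ _ fun _ => hφ
  have hFm : Measurable (fun x : Fin m → ℝ => ∏ p ∈ E, V (x p.1) (x p.2)) :=
    Finset.measurable_prod _ fun p _ => measurable_pair_apply hVm p.1 p.2
  conv_rhs => rw [← hπ.map_eq]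
  rw [integral_map hπ.measurable.aemeasurable hFm.aestronglyMeasurable]

end AuxCountingLemma

/-- the counting lemma
`|t(H,W) − t(H,W')| ≤ e(H) · d_□(W,W')`. -/
theorem counting_lemma {m : ℕ} (H : SimpleGraph (Fin m)) [DecidableRel H.Adj]
    (W W' : ℝ → ℝ → ℝ) (hW : IsGraphon W) (hW' : IsGraphon W') :
    |homDensity H W - homDensity H W'| ≤ (edgeCount H : ℝ) * cutDist W W' := by
  set D := {r : ℝ | ∃ φ : ℝ → ℝ, MeasurePreserving φ muI muI ∧
    r = cutNorm (fun x y => W (φ x) (φ y) - W' x y)} with hDdef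
  have hWb : ∀ x y : ℝ, |W x y| ≤ 1 := by
    intro x y
    have h := hW.2.2 x y
    simp only [Set.mem_Icc] at h
    rw [abs_le]; exact ⟨by linarith [h.1], h.2⟩
  have key : ∀ r ∈ D, |homDensity H W - homDensity H W'| ≤ (edgeCount H : ℝ) * r := by
    rintro r ⟨φ, hφ, rfl⟩
    have hWφ : IsGraphon (fun x y => W (φ x) (φ y)) := by
      refine ⟨?_, fun x y => hW.2.1 _ _, fun x y => hW.2.2 _ _⟩
      exact hW.1.comp' (f := fun p : ℝ × ℝ => (φ p.1, φ p.2))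
        ((hφ.measurable.comp measurable_fst).prodMk (hφ.measurable.comp measurable_snd))
    have hinv : homDensity H (fun x y => W (φ x) (φ y)) = homDensity H W :=
      prod_comp_invariance (edgeFinset' H) W hW.1 hWb hφ
    have hcc := counting_cutNorm H (fun x y => W (φ x) (φ y)) W' hWφ hW'
    calc |homDensity H W - homDensity H W'|
        = |homDensity H (fun x y => W (φ x) (φ y)) - homDensity H W'| := by rw [hinv]
      _ ≤ (edgeCount H : ℝ) * cutNorm (fun x y => W (φ x) (φ y) - W' x y) := hcc
  have hne : D.Nonempty :=
    ⟨cutNorm (fun x y => W (id x) (id y) - W' x y),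
      ⟨id, MeasurePreserving.id muI, rfl⟩⟩
  have hcd : cutDist W W' = sInf D := rfl
  rcases Nat.eq_zero_or_pos (edgeCount H) with h0 | hpos
  · obtain ⟨r, hr⟩ := hne
    have h2 : |homDensity H W - homDensity H W'| ≤ 0 := by
      have := key r hr
      rw [h0] at this
      simpa using this
    rw [h0]
    simpa using h2
  · have hposR : (0:ℝ) < (edgeCount H : ℝ) := by exact_mod_cast hpos
    have hlow : |homDensity H W - homDensity H W'| / (edgeCount H : ℝ) ≤ sInf D := by
      refine le_csInf hne fun r hr => ?_
      rw [div_le_iff₀ hposR]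
      rw [mul_comm]
      exact key r hr
    rw [hcd, mul_comm]
    rw [div_le_iff₀ hposR] at hlow
    exact hlow
end
end

section
/- Let H be a non-bipartite graph with c connected components, |H| vertices and e(H) edges, and let k ≥ 2, d = 2e(H)/|H|. If 2^{−(k−1)(|H|−c)} < k^{−e(H)+1}, then H is not k-common. In particular, if H is connected and non-bipartite with average degree d, then κ(H) ≤ ⌈2d log₂ d⌉, where κ(H) is the least k for which H is not k-common. -/
open MeasureTheory

set_option maxHeartbeats 1000000
noncomputable section

/-- `H` is not `k`-common (graphon formulation). -/
def NotKCommon {m : ℕ} (H : SimpleGraph (Fin m)) [DecidableRel H.Adj]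
    (k : ℕ) : Prop :=
  ∃ W : Fin k → ℝ → ℝ → ℝ, (∀ i, IsGraphon (W i)) ∧
    (∀ x y, ∑ i, W i x y = 1) ∧
    ∑ i, homDensity H (W i) < (k : ℝ) ^ (1 - (edgeCount H : ℤ))

section
namespace AuxNKC
open SimpleGraph

lemma exists_testBit {x : ℕ} (hx : x ≠ 0) : ∃ i, x.testBit i = true := by
  by_contra h
  push_neg at h
  exact hx (Nat.eq_of_testBit_eq fun i => by simp [h i])

def lowBit (x : ℕ) : ℕ := if h : x = 0 then 0 else Nat.find (exists_testBit h)

lemma lowBit_testBit {x : ℕ} (hx : x ≠ 0) : x.testBit (lowBit x) = true := by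
  rw [lowBit, dif_neg hx]; exact Nat.find_spec (exists_testBit hx)

lemma lowBit_lt {x t : ℕ} (hx : x ≠ 0) (h : x < 2 ^ t) : lowBit x < t := by
  have h1 := Nat.ge_two_pow_of_testBit (lowBit_testBit hx)
  have := lt_of_le_of_lt h1 h
  exact (Nat.pow_lt_pow_iff_right one_lt_two).mp this

def part (N : ℕ) (x : ℝ) : ℕ := min (N - 1) ⌊x * N⌋₊

lemma measurable_part (N : ℕ) : Measurable (part N) := by
  have h1 : Measurable fun x : ℝ => ⌊x * (N:ℝ)⌋₊ :=
    Nat.measurable_floor.comp (measurable_id.mul_const _)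
  exact (measurable_of_countable (fun n : ℕ => min (N-1) n)).comp h1

lemma part_lt {N : ℕ} (hN : 0 < N) (x : ℝ) : part N x < N := by
  unfold part; omega

lemma map_part {N : ℕ} (hN : 0 < N) {j : ℕ} (hj : j < N) :
    muI (part N ⁻¹' {j}) = ENNReal.ofReal (1 / N) := by
  have hNR : (0:ℝ) < N := by exact_mod_cast hN
  have hmeas : MeasurableSet (part N ⁻¹' {j}) :=
    measurable_part N (measurableSet_singleton j)
  rw [Measure.restrict_apply hmeas]
  rcases lt_or_ge j (N - 1) with hlt | hge
  · have hset : part N ⁻¹' {j} ∩ Set.Icc 0 1 = Set.Ico ((j:ℝ)/N) ((j+1:ℕ)/N) := by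
      ext x
      simp only [Set.mem_inter_iff, Set.mem_preimage, Set.mem_singleton_iff, Set.mem_Icc,
        Set.mem_Ico, part]
      constructor
      · rintro ⟨hpart, hx0, hx1⟩
        have hfl : ⌊x * N⌋₊ = j := by omega
        have h2 := Nat.floor_eq_iff (by positivity : (0:ℝ) ≤ x * N) |>.mp hfl
        constructor
        · rw [div_le_iff₀ hNR]; exact h2.1
        · rw [lt_div_iff₀ hNR]; exact_mod_cast h2.2
      · rintro ⟨h1, h2⟩
        have hx0 : 0 ≤ x := le_trans (by positivity) h1
        have hxN1 : x * N < (j+1:ℕ) := by rw [← lt_div_iff₀ hNR] at *; exact_mod_cast h2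
        have hxN0 : (j:ℝ) ≤ x * N := by rwa [← div_le_iff₀ hNR]
        have hfl : ⌊x * N⌋₊ = j :=
          Nat.floor_eq_iff (by positivity) |>.mpr ⟨hxN0, by exact_mod_cast hxN1⟩
        refine ⟨by omega, hx0, ?_⟩
        have : x * N < N := lt_of_lt_of_le hxN1 (by exact_mod_cast hj)
        nlinarith
    rw [hset, Real.volume_Ico]
    congr 1
    push_cast
    field_simp
    ring
  · have hj' : j = N - 1 := by omega
    subst hj'
    have hset : part N ⁻¹' {N-1} ∩ Set.Icc 0 1 = Set.Icc (((N:ℝ)-1)/N) 1 := by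
      ext x
      simp only [Set.mem_inter_iff, Set.mem_preimage, Set.mem_singleton_iff, Set.mem_Icc, part]
      constructor
      · rintro ⟨hpart, hx0, hx1⟩
        refine ⟨?_, hx1⟩
        have hfl : N - 1 ≤ ⌊x * N⌋₊ := by omega
        have : ((N:ℕ) - 1 : ℕ) ≤ x * N := (Nat.le_floor_iff (by positivity)).mp hfl
        have hcast : ((N - 1 : ℕ) : ℝ) = (N:ℝ) - 1 := by
          push_cast [Nat.cast_sub hN]; ring
        rw [div_le_iff₀ hNR, ← hcast]; exact this
      · rintro ⟨h1, hx1⟩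
        have hN1 : (1:ℝ) ≤ N := by exact_mod_cast hN
        have hx0 : 0 ≤ x := le_trans (div_nonneg (by linarith) hNR.le) h1
        have h2 : (N:ℝ) - 1 ≤ x * N := by rwa [div_le_iff₀ hNR] at h1
        have hcast : ((N - 1 : ℕ) : ℝ) = (N:ℝ) - 1 := by
          push_cast [Nat.cast_sub hN]; ring
        have hfl : N - 1 ≤ ⌊x * N⌋₊ := (Nat.le_floor_iff (by positivity)).mpr (by rw [hcast]; exact h2)
        exact ⟨by omega, hx0, hx1⟩
    rw [hset, Real.volume_Icc]
    congr 1
    field_simp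
    ring


open SimpleGraph

lemma adj_of_mem {m : ℕ} {H : SimpleGraph (Fin m)} [DecidableRel H.Adj]
    {p : Fin m × Fin m} (hp : p ∈ edgeFinset' H) : p.1 < p.2 ∧ H.Adj p.1 p.2 :=
  (Finset.mem_filter.mp hp).2

lemma forall_edge_iff {m N : ℕ} {H : SimpleGraph (Fin m)} [DecidableRel H.Adj]
    (q : Fin m → Fin N) :
    (∀ p ∈ edgeFinset' H, q p.1 = q p.2) ↔ (∀ u v : Fin m, H.Adj u v → q u = q v) := by
  constructor
  · intro h u v huv
    rcases lt_trichotomy u v with hlt | heq | hgt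
    · exact h (u,v) (by simp [edgeFinset', hlt, huv])
    · exact absurd heq huv.ne
    · exact (h (v,u) (by simp [edgeFinset', hgt, huv.symm])).symm
  · intro h p hp
    exact h _ _ (adj_of_mem hp).2

lemma card_const_on_components {m : ℕ} (H : SimpleGraph (Fin m)) [DecidableRel H.Adj]
    (N : ℕ) :
    ((Finset.univ.filter fun q : Fin m → Fin N =>
        ∀ p ∈ edgeFinset' H, q p.1 = q p.2)).card = N ^ Nat.card H.ConnectedComponent := by
  classical
  haveI : Finite H.ConnectedComponent :=
    Finite.of_surjective H.connectedComponentMk Quot.mk_surjective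
  letI : Fintype H.ConnectedComponent := Fintype.ofFinite _
  rw [Nat.card_eq_fintype_card,
    show N ^ Fintype.card H.ConnectedComponent = Fintype.card (H.ConnectedComponent → Fin N) by
      rw [Fintype.card_fun, Fintype.card_fin],
    ← Finset.card_univ]
  have hwalk : ∀ (q : Fin m → Fin N), (∀ u v, H.Adj u v → q u = q v) →
      ∀ (u v : Fin m) (p : H.Walk u v), q u = q v := by
    intro q hq u v p
    induction p with
    | nil => rfl
    | cons h p ih => exact (hq _ _ h).trans ih
  refine Finset.card_bij'
    (fun q hq => ConnectedComponent.lift q (fun v w p _ => hwalk q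
      ((forall_edge_iff q).mp (by simpa using Finset.mem_filter.mp hq |>.2)) v w p))
    (fun g _ => g ∘ H.connectedComponentMk) ?_ ?_ ?_ ?_
  · intro q hq
    exact Finset.mem_univ _
  · intro g hg
    refine Finset.mem_filter.mpr ⟨Finset.mem_univ _, fun p hp => ?_⟩
    have := ConnectedComponent.connectedComponentMk_eq_of_adj (adj_of_mem hp).2
    simp only [Function.comp_apply, this]
  · intro q hq
    rfl
  · intro g hg
    funext c
    induction c using SimpleGraph.ConnectedComponent.ind
    rfl

lemma two_edgeCount_le {m : ℕ} (H : SimpleGraph (Fin m)) [DecidableRel H.Adj] :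
    2 * edgeCount H ≤ m * (m - 1) := by
  classical
  have hsub : edgeFinset' H ∪ (edgeFinset' H).image Prod.swap ⊆ Finset.univ.offDiag := by
    intro p hp
    rcases Finset.mem_union.mp hp with h | h
    · obtain ⟨hlt, hadj⟩ := adj_of_mem h
      exact Finset.mem_offDiag.mpr ⟨Finset.mem_univ _, Finset.mem_univ _, ne_of_lt hlt⟩
    · obtain ⟨q, hq, rfl⟩ := Finset.mem_image.mp h
      obtain ⟨hlt, hadj⟩ := adj_of_mem hq
      exact Finset.mem_offDiag.mpr ⟨Finset.mem_univ _, Finset.mem_univ _, (ne_of_lt hlt).symm⟩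
  have hdisj : Disjoint (edgeFinset' H) ((edgeFinset' H).image Prod.swap) := by
    rw [Finset.disjoint_left]
    intro p hp hp'
    obtain ⟨hlt, _⟩ := adj_of_mem hp
    obtain ⟨q, hq, hqe⟩ := Finset.mem_image.mp hp'
    obtain ⟨hlt', _⟩ := adj_of_mem hq
    rw [← hqe] at hlt
    exact absurd hlt (by simp [Prod.swap]; exact le_of_lt hlt')
  have hcard := Finset.card_le_card hsub
  rw [Finset.card_union_of_disjoint hdisj, Finset.card_image_of_injective _ Prod.swap_injective,
    Finset.offDiag_card, Finset.card_univ, Fintype.card_fin] at hcard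
  have h2 : m * (m - 1) = m * m - m := by rw [Nat.mul_sub, mul_one]
  unfold edgeCount
  omega



open SimpleGraph

lemma m_le_edgeCount {m : ℕ} (H : SimpleGraph (Fin m)) [DecidableRel H.Adj]
    (hm : 0 < m) (hconn : H.Connected) (hnb : ¬ H.Colorable 2) : m ≤ edgeCount H := by
  classical
  set r : Fin m := ⟨0, hm⟩ with hr
  have hDadj : ∀ u v : Fin m, H.Adj u v → H.dist r u ≤ H.dist r v + 1 := by
    intro u v huv
    have h1 : H.dist r u ≤ H.dist r v + H.dist v u := hconn.dist_triangle
    have h2 : H.dist v u ≤ 1 := by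
      simpa using SimpleGraph.dist_le (SimpleGraph.Walk.cons huv.symm SimpleGraph.Walk.nil)
    omega
  have key : ∀ v : Fin m, v ≠ r → ∃ w, H.Adj v w ∧ H.dist r w + 1 = H.dist r v := by
    intro v hv
    have hreach : H.Reachable r v := hconn.preconnected r v
    obtain ⟨p, hp⟩ := hreach.exists_walk_length_eq_dist
    have hpos : 0 < H.dist r v := hreach.pos_dist_of_ne (Ne.symm hv)
    have hnil : ¬ (p.reverse).Nil := by
      rw [SimpleGraph.Walk.nil_iff_length_eq, SimpleGraph.Walk.length_reverse, hp]
      omega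
    obtain ⟨w, hadj, q, hq⟩ := SimpleGraph.Walk.not_nil_iff.mp hnil
    have hlen : q.length + 1 = H.dist r v := by
      have h3 := congrArg SimpleGraph.Walk.length hq
      rw [SimpleGraph.Walk.length_reverse, hp] at h3
      simp only [SimpleGraph.Walk.length_cons] at h3
      omega
    have hw1 : H.dist r w + 1 ≤ H.dist r v := by
      have h4 : H.dist r w ≤ q.reverse.length := SimpleGraph.dist_le q.reverse
      rw [SimpleGraph.Walk.length_reverse] at h4
      omega
    have hw2 : H.dist r v ≤ H.dist r w + 1 := hDadj v w hadj
    exact ⟨w, hadj, by omega⟩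
  choose ch hch1 hch2 using key
  have hbad : ∃ u v, H.Adj u v ∧ H.dist r u = H.dist r v := by
    by_contra hb
    push_neg at hb
    have C : H.Coloring Bool := SimpleGraph.Coloring.mk
      (fun v => decide (H.dist r v % 2 = 1))
      (by
        intro a b hab
        have h1 := hDadj a b hab
        have h2 := hDadj b a hab.symm
        have h3 := hb a b hab
        simp only [ne_eq, decide_eq_decide]
        omega)
    exact hnb (by simpa using C.colorable)
  obtain ⟨u, v, huv, hDuv⟩ := hbad
  set P : Fin m → Fin m → Fin m × Fin m := fun a b => if a < b then (a, b) else (b, a) with hP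
  have hPmem : ∀ a b, H.Adj a b → P a b ∈ edgeFinset' H := by
    intro a b hab
    by_cases h : a < b
    · simp [P, h, edgeFinset', hab]
    · have hba : b < a := lt_of_le_of_ne (not_lt.mp h) (fun e => hab.ne e.symm)
      simp [P, h, edgeFinset', hba, hab.symm]
  have hPcases : ∀ a b : Fin m, P a b = (a,b) ∨ P a b = (b,a) := by
    intro a b; by_cases h : a < b <;> simp [P, h]
  set f : Fin m → Fin m × Fin m := fun w => if h : w = r then (r, r) else P w (ch w h) with hf
  set s : Finset (Fin m × Fin m) := (Finset.univ.erase r).image f with hs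
  have hinj : Set.InjOn f (Finset.univ.erase r) := by
    intro a ha b hb hab
    have ha' : a ≠ r := (Finset.mem_erase.mp (Finset.mem_coe.mp ha)).1
    have hb' : b ≠ r := (Finset.mem_erase.mp (Finset.mem_coe.mp hb)).1
    rw [hf] at hab
    simp only [dif_neg ha', dif_neg hb'] at hab
    have hda := hch2 a ha'
    have hdb := hch2 b hb'
    rcases hPcases a (ch a ha') with h1 | h1 <;> rcases hPcases b (ch b hb') with h2 | h2 <;>
        rw [h1, h2, Prod.mk.injEq] at hab <;> obtain ⟨e1, e2⟩ := hab
    · exact e1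
    · rw [← e1] at hdb; rw [e2] at hda; omega
    · rw [e1] at hda; rw [← e2] at hdb; omega
    · exact e2
  have hcards : s.card = m - 1 := by
    rw [hs, Finset.card_image_of_injOn hinj, Finset.card_erase_of_mem (Finset.mem_univ r),
      Finset.card_univ, Fintype.card_fin]
  have hnotmem : P u v ∉ s := by
    intro hmem
    obtain ⟨w, hw, hweq⟩ := Finset.mem_image.mp hmem
    have hw' : w ≠ r := (Finset.mem_erase.mp hw).1
    rw [hf] at hweq
    simp only [dif_neg hw'] at hweq
    have hdw := hch2 w hw'
    rcases hPcases w (ch w hw') with h1 | h1 <;> rw [h1] at hweq <;>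
      rcases hPcases u v with h2 | h2 <;> rw [h2, Prod.mk.injEq] at hweq <;>
        obtain ⟨e1, e2⟩ := hweq <;>
      first
        | (rw [e2] at hdw; rw [e1] at hdw; omega)
        | (rw [e1] at hdw; rw [e2] at hdw; omega)
  have hsubset : insert (P u v) s ⊆ edgeFinset' H := by
    intro p hp
    rcases Finset.mem_insert.mp hp with rfl | hp
    · exact hPmem u v huv
    · obtain ⟨w, hw, hweq⟩ := Finset.mem_image.mp hp
      have hw' : w ≠ r := (Finset.mem_erase.mp hw).1
      rw [hf] at hweq
      simp only [dif_neg hw'] at hweq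
      rw [← hweq]
      exact hPmem w (ch w hw') (hch1 w hw')
  have hfinal := Finset.card_le_card hsubset
  rw [Finset.card_insert_of_notMem hnotmem, hcards] at hfinal
  unfold edgeCount
  omega


lemma analytic {e m k : ℕ} {d : ℝ} (hm : 0 < m) (hd : d = 2 * e / m)
    (hem : m ≤ e) (hub : 2 * e ≤ m * (m - 1))
    (hk : k = ⌈2 * d * Real.logb 2 d⌉₊) :
    2 ≤ k ∧ (2:ℝ) ^ (-(((k - 1) * (m - 1) : ℕ) : ℤ)) < (k : ℝ) ^ (1 - (e : ℤ)) := by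
  have hmR : (0:ℝ) < m := by exact_mod_cast hm
  have heR : (m:ℝ) ≤ e := by exact_mod_cast hem
  have hd2 : (2:ℝ) ≤ d := by
    rw [hd, le_div_iff₀ hmR]; linarith
  set L := Real.logb 2 d with hLdef
  have hL1 : (1:ℝ) ≤ L := by
    rw [hLdef, show (1:ℝ) = Real.logb 2 2 from (Real.logb_self_eq_one one_lt_two).symm]
    exact Real.logb_le_logb_of_le one_lt_two two_pos hd2
  have hd_le : d ≤ (m:ℝ) - 1 := by
    have hubR : 2 * (e:ℝ) ≤ m * ((m:ℝ) - 1) := by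
      have := hub
      have h1 : ((m * (m-1) : ℕ) : ℝ) = (m:ℝ) * ((m:ℝ) - 1) := by
        push_cast [Nat.cast_sub hm]; ring
      calc 2 * (e:ℝ) = ((2 * e : ℕ) : ℝ) := by push_cast; ring
        _ ≤ ((m * (m-1) : ℕ) : ℝ) := by exact_mod_cast this
        _ = (m:ℝ) * ((m:ℝ) - 1) := h1
    rw [hd, div_le_iff₀ hmR]; nlinarith
  have h4 : (4:ℝ) ≤ 2 * d * L := by nlinarith
  have hkK : 2 * d * L ≤ (k:ℝ) := by rw [hk]; exact Nat.le_ceil _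
  have hk4 : 4 ≤ k := by
    have : (4:ℝ) ≤ (k:ℝ) := le_trans h4 hkK
    exact_mod_cast this
  have hkub : (k:ℝ) ≤ 2*d*L + 1 := by
    rw [hk]; exact le_of_lt (Nat.ceil_lt_add_one (by linarith))
  have hKpos : (0:ℝ) < k := by
    have : (4:ℝ) ≤ (k:ℝ) := le_trans h4 hkK
    linarith
  have hlnK_pos : 0 < Real.log k := Real.log_pos (by linarith [le_trans h4 hkK])
  have l2a := Real.log_two_gt_d9
  have l2b := Real.log_two_lt_d9
  have hlnd : Real.log d = L * Real.log 2 := by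
    rw [hLdef, Real.logb]
    field_simp
  have hdpos : (0:ℝ) < d := by linarith
  set t : ℝ := (k:ℝ) / (4*d) with htdef
  have htk : (k:ℝ) = 4*d*t := by rw [htdef]; field_simp
  have hlogK : Real.log k ≤ 2*Real.log 2 + L * Real.log 2 + (t - 1) := by
    have h5 : Real.log t ≤ t - 1 := Real.log_le_sub_one_of_pos (by positivity)
    have h6 : Real.log t = Real.log k - Real.log (4*d) := by
      rw [htdef]; exact Real.log_div (by positivity) (by positivity)
    have h7 : Real.log (4*d) = Real.log 4 + Real.log d := Real.log_mul (by norm_num) (by positivity)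
    have h8 : Real.log 4 = 2 * Real.log 2 := by
      rw [show (4:ℝ) = 2^2 by norm_num, Real.log_pow]; push_cast; ring
    linarith
  have ht2 : L ≤ 2 * t := by nlinarith [hkK, htk, hdpos]
  have l2pos : (0:ℝ) < Real.log 2 := by linarith
  have hdd : (0:ℝ) ≤ (d-2)*d := mul_nonneg (by linarith) (by linarith)
  have hld2 : (0:ℝ) ≤ (Real.log 2 - 0.6931471803) * d^2 :=
    mul_nonneg (by linarith) (sq_nonneg d)
  have h_ii : (d^2 + d - 2) * Real.log k < 2*d*((k:ℝ)-1) * Real.log 2 := by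
    have hQ : (4:ℝ) ≤ d^2 + d - 2 := by nlinarith
    have hQK : (d^2+d-2) * Real.log k ≤ (d^2+d-2) * (2*Real.log 2 + L*Real.log 2 + (t-1)) :=
      mul_le_mul_of_nonneg_left hlogK (by linarith)
    have hc1 : (0:ℝ) ≤ 8*d^2*Real.log 2 - (d^2+d-2) := by nlinarith [hld2, hdd]
    have h1 : (0:ℝ) ≤ (t - L/2) * (8*d^2*Real.log 2 - (d^2+d-2)) :=
      mul_nonneg (by linarith) hc1
    have hc2 : (0:ℝ) ≤ 4*d^2*Real.log 2 - (d^2+d-2)*(Real.log 2 + 1/2) := by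
      nlinarith [mul_nonneg (by linarith : (0:ℝ) ≤ Real.log 2 - 0.6931471803)
        (by nlinarith : (0:ℝ) ≤ 3*d^2 - d + 2), hdd]
    have h2 : (0:ℝ) ≤ (L - 1) * (4*d^2*Real.log 2 - (d^2+d-2)*(Real.log 2 + 1/2)) :=
      mul_nonneg (by linarith) hc2
    have h3 : (0:ℝ) < Real.log 2 * (4*d^2 - 20*d + 24) + 2*(d^2+d-2) := by
      nlinarith [mul_nonneg l2pos.le (sq_nonneg (2*d-5))]
    have hgoal : (d^2+d-2) * (2*Real.log 2 + L*Real.log 2 + (t-1)) <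
        2*d*((k:ℝ)-1) * Real.log 2 := by
      rw [htk]
      nlinarith [h1, h2, h3]
    linarith
  have hA : 0 ≤ 2*((k:ℝ)-1) * Real.log 2 - d * Real.log k := by
    nlinarith [h_ii, mul_nonneg (by linarith : (0:ℝ) ≤ d - 2) hlnK_pos.le, hlnK_pos, hd2]
  have hmd : d + 1 ≤ (m:ℝ) := by linarith
  have heq : 2*(e:ℝ) = d * m := by rw [hd]; field_simp
  have heq2 : 2*(e:ℝ)*Real.log k = d * (m:ℝ) * Real.log k := by rw [← heq]
  have main : ((e:ℝ) - 1) * Real.log k < ((k:ℝ)-1)*((m:ℝ)-1)*Real.log 2 := by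
    nlinarith [mul_nonneg (by linarith : (0:ℝ) ≤ (m:ℝ) - (d+1)) hA, h_ii, heq2, hlnK_pos]
  refine ⟨by omega, ?_⟩
  have hlhs : (0:ℝ) < (2:ℝ) ^ (-(((k - 1) * (m - 1) : ℕ) : ℤ)) := zpow_pos (by norm_num) _
  have hrhs : (0:ℝ) < (k : ℝ) ^ (1 - (e : ℤ)) := zpow_pos hKpos _
  rw [← Real.log_lt_log_iff hlhs hrhs, Real.log_zpow, Real.log_zpow]
  push_cast
  rw [Nat.cast_sub (show 1 ≤ k by omega), Nat.cast_sub hm]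
  push_cast
  linarith [main]

lemma notKCommon_main {m : ℕ} (H : SimpleGraph (Fin m)) [DecidableRel H.Adj]
    (hm : 0 < m) (hnb : ¬ H.Colorable 2) (c : ℕ) (hc : c = Nat.card H.ConnectedComponent)
    {k : ℕ} (hk : 2 ≤ k)
    (hlt : (2:ℝ) ^ (-(((k-1)*(m-c) : ℕ) : ℤ)) < (k:ℝ) ^ (1 - (edgeCount H : ℤ))) :
    NotKCommon H k := by
  classical
  set N : ℕ := 2 ^ (k-1) with hN
  have hN0 : 0 < N := by positivity
  set pF : ℝ → Fin N := fun x => ⟨part N x, part_lt hN0 x⟩ with hpF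
  have hpre : ∀ j : Fin N, pF ⁻¹' {j} = part N ⁻¹' {(j:ℕ)} := by
    intro j; ext x; simp [hpF, Fin.ext_iff]
  have hpFmeas : Measurable pF := by
    apply measurable_to_countable'
    intro j
    rw [hpre j]
    exact measurable_part N (measurableSet_singleton _)
  have hklt : k - 1 < k := by omega
  set philast : Fin k := ⟨k-1, hklt⟩ with hpl
  set phiv : Fin N → Fin N → ℕ :=
    fun a b => if a = b then k-1 else lowBit (a.val ^^^ b.val) with hphiv
  have hxne : ∀ a b : Fin N, a ≠ b → (a.val ^^^ b.val) ≠ 0 := by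
    intro a b hab h
    exact hab (Fin.ext (by simpa using h))
  have hphiv_lt1 : ∀ a b : Fin N, a ≠ b → phiv a b < k - 1 := by
    intro a b hab
    rw [hphiv]; dsimp only
    rw [if_neg hab]
    exact lowBit_lt (hxne a b hab) (Nat.xor_lt_two_pow (hN ▸ a.isLt) (hN ▸ b.isLt))
  have hphiv_lt : ∀ a b : Fin N, phiv a b < k := by
    intro a b
    by_cases hab : a = b
    · rw [hphiv]; dsimp only; rw [if_pos hab]; omega
    · have := hphiv_lt1 a b hab; omega
  set phi : Fin N → Fin N → Fin k := fun a b => ⟨phiv a b, hphiv_lt a b⟩ with hphi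
  have hphi_symm : ∀ a b, phi a b = phi b a := by
    intro a b
    apply Fin.ext
    rw [hphi]; dsimp only
    rw [hphiv]; dsimp only
    rcases eq_or_ne a b with h | h
    · simp [h]
    · rw [if_neg h, if_neg (Ne.symm h), Nat.xor_comm]
  have hphi_last : ∀ a b, phi a b = philast ↔ a = b := by
    intro a b
    constructor
    · intro h
      by_contra hab
      have h1 := hphiv_lt1 a b hab
      have h2 : phiv a b = k - 1 := by
        have := congrArg Fin.val h
        simpa [hphi, hpl] using this
      omega
    · intro h
      apply Fin.ext
      simp [hphi, hphiv, hpl, h]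
  have hphi_bit : ∀ (a b : Fin N) (i : Fin k), a ≠ b → phi a b = i →
      (a.val).testBit i.val ≠ (b.val).testBit i.val := by
    intro a b i hab hphieq
    have hival : i.val = lowBit (a.val ^^^ b.val) := by
      have := congrArg Fin.val hphieq
      simp only [hphi, hphiv] at this
      rw [if_neg hab] at this
      omega
    have htb : (a.val ^^^ b.val).testBit i.val = true := by
      rw [hival]; exact lowBit_testBit (hxne a b hab)
    rw [Nat.testBit_xor] at htb
    intro hcon
    rw [hcon] at htb
    simp at htb
  set W : Fin k → ℝ → ℝ → ℝ :=
    fun i x y => if phi (pF x) (pF y) = i then 1 else 0 with hW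
  have hEne : (edgeFinset' H).Nonempty := by
    by_contra hE
    rw [Finset.not_nonempty_iff_eq_empty] at hE
    have hnoadj : ∀ u v : Fin m, ¬ H.Adj u v := by
      intro u v huv
      rcases lt_trichotomy u v with h|h|h
      · have : (u,v) ∈ edgeFinset' H := by simp [edgeFinset', h, huv]
        simp [hE] at this
      · exact huv.ne h
      · have : (v,u) ∈ edgeFinset' H := by simp [edgeFinset', h, huv.symm]
        simp [hE] at this
    exact hnb ⟨SimpleGraph.Coloring.mk (fun _ => (0 : Fin 2))
      (fun {u v} h => absurd h (hnoadj u v))⟩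
  haveI : IsProbabilityMeasure muI := ⟨by
    rw [Measure.restrict_apply_univ]
    simp [Real.volume_Icc]⟩
  set ν : Measure (Fin N) := muI.map pF with hν
  haveI : IsProbabilityMeasure ν := Measure.isProbabilityMeasure_map hpFmeas.aemeasurable
  have hmp : MeasurePreserving (fun (x : Fin m → ℝ) (j : Fin m) => pF (x j))
      (Measure.pi fun _ => muI) (Measure.pi fun _ => ν) :=
    measurePreserving_pi _ _ (fun _ => ⟨hpFmeas, rfl⟩)
  have hνsingle : ∀ a : Fin N, ν {a} = ENNReal.ofReal (1/(N:ℝ)) := by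
    intro a
    rw [hν, Measure.map_apply hpFmeas (measurableSet_singleton a), hpre a]
    exact map_part hN0 a.isLt
  have hpisingle : ∀ q : Fin m → Fin N,
      ((Measure.pi fun _ => ν) {q}).toReal = (1/(N:ℝ))^m := by
    intro q
    rw [← Set.univ_pi_singleton q, Measure.pi_pi]
    simp only [hνsingle, Finset.prod_const, Finset.card_univ, Fintype.card_fin]
    rw [ENNReal.toReal_pow, ENNReal.toReal_ofReal (by positivity)]
  set F : Fin k → (Fin m → Fin N) → ℝ :=
    fun i q => ∏ p ∈ edgeFinset' H, (if phi (q p.1) (q p.2) = i then (1:ℝ) else 0) with hF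
  have hdens : ∀ i, homDensity H (W i) = ∑ q : Fin m → Fin N, (1/(N:ℝ))^m * F i q := by
    intro i
    have h1 : ∀ x : Fin m → ℝ,
        (∏ p ∈ edgeFinset' H, W i (x p.1) (x p.2)) = F i (fun j => pF (x j)) := fun x => rfl
    calc homDensity H (W i)
        = ∫ x : Fin m → ℝ, F i (fun j => pF (x j)) ∂(Measure.pi fun _ => muI) := by
          rw [homDensity]
      _ = ∫ q, F i q ∂(Measure.pi fun _ => ν) := by
          rw [← hmp.map_eq,
            integral_map hmp.measurable.aemeasurable
              (measurable_of_countable _).aestronglyMeasurable]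
      _ = ∑ q : Fin m → Fin N, ((Measure.pi fun _ => ν) {q}).toReal • F i q :=
          integral_fintype (Integrable.of_finite)
      _ = ∑ q : Fin m → Fin N, (1/(N:ℝ))^m * F i q := by
          simp only [hpisingle, smul_eq_mul]
  have hsumF : ∀ q : Fin m → Fin N,
      ∑ i, F i q = if (∀ p ∈ edgeFinset' H, q p.1 = q p.2) then 1 else 0 := by
    intro q
    by_cases hq : ∀ p ∈ edgeFinset' H, q p.1 = q p.2
    · rw [if_pos hq]
      have hFi : ∀ i, F i q = if philast = i then 1 else 0 := by
        intro i
        rw [hF]; dsimp only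
        rw [Finset.prod_congr rfl (fun p hp => by rw [(hphi_last _ _).mpr (hq p hp)])]
        rw [Finset.prod_const]
        by_cases hip : philast = i
        · rw [if_pos hip, one_pow]
        · rw [if_neg hip, zero_pow (by
            have := hEne.card_pos; omega)]
      rw [Finset.sum_congr rfl (fun i _ => hFi i), Finset.sum_ite_eq]
      simp
    · rw [if_neg hq]
      push_neg at hq
      obtain ⟨p₀, hp₀, hne₀⟩ := hq
      refine Finset.sum_eq_zero ?_
      intro i _
      by_cases hi : i = philast
      · refine Finset.prod_eq_zero hp₀ ?_
        rw [if_neg]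
        intro hcontra
        rw [hi] at hcontra
        exact hne₀ ((hphi_last _ _).mp hcontra)
      · by_contra hFi
        have hall : ∀ p ∈ edgeFinset' H, phi (q p.1) (q p.2) = i := by
          intro p hp
          by_contra hcon
          exact hFi (Finset.prod_eq_zero hp (by rw [if_neg hcon]))
        have hadjphi : ∀ u v, H.Adj u v → phi (q u) (q v) = i := by
          intro u v huv
          rcases lt_trichotomy u v with h|h|h
          · exact hall (u,v) (by simp [edgeFinset', h, huv])
          · exact absurd h huv.ne
          · rw [hphi_symm]
            exact hall (v,u) (by simp [edgeFinset', h, huv.symm])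
        have hqne : ∀ u v, H.Adj u v → q u ≠ q v := by
          intro u v huv hqe
          exact hi ((hadjphi u v huv).symm.trans ((hphi_last _ _).mpr hqe))
        refine hnb ?_
        have C : H.Coloring Bool := SimpleGraph.Coloring.mk
          (fun v => ((q v).val).testBit i.val)
          (fun {u v} huv => hphi_bit _ _ i (hqne u v huv) (hadjphi u v huv))
        simpa using C.colorable
  have hcm : c ≤ m := by
    rw [hc]
    have h1 : Nat.card H.ConnectedComponent ≤ Nat.card (Fin m) :=
      Nat.card_le_card_of_surjective _ Quot.mk_surjective
    simpa using h1
  have htotal : ∑ i, homDensity H (W i) = (1/(N:ℝ))^m * (N:ℝ)^c := by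
    calc ∑ i, homDensity H (W i)
        = ∑ i, ∑ q : Fin m → Fin N, (1/(N:ℝ))^m * F i q :=
          Finset.sum_congr rfl (fun i _ => hdens i)
      _ = ∑ q : Fin m → Fin N, ∑ i, (1/(N:ℝ))^m * F i q := Finset.sum_comm
      _ = ∑ q : Fin m → Fin N, (1/(N:ℝ))^m *
            (if (∀ p ∈ edgeFinset' H, q p.1 = q p.2) then 1 else 0) := by
          refine Finset.sum_congr rfl (fun q _ => ?_)
          rw [← Finset.mul_sum, hsumF q]
      _ = (1/(N:ℝ))^m * ∑ q : Fin m → Fin N,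
            (if (∀ p ∈ edgeFinset' H, q p.1 = q p.2) then (1:ℝ) else 0) := by
          rw [Finset.mul_sum]
      _ = (1/(N:ℝ))^m * ((Finset.univ.filter fun q : Fin m → Fin N =>
            ∀ p ∈ edgeFinset' H, q p.1 = q p.2).card : ℝ) := by
          rw [Finset.sum_boole]
      _ = (1/(N:ℝ))^m * (N:ℝ)^c := by
          rw [card_const_on_components H N, ← hc]
          push_cast
          ring
  have hnum : (1/(N:ℝ))^m * (N:ℝ)^c = (2:ℝ) ^ (-(((k-1)*(m-c) : ℕ) : ℤ)) := by
    have hNR : (N:ℝ) = 2^(k-1) := by rw [hN]; push_cast; ring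
    have hsub : (k-1)*(m-c) = (k-1)*m - (k-1)*c := by rw [Nat.mul_sub]
    have hle : (k-1)*c ≤ (k-1)*m := Nat.mul_le_mul_left _ hcm
    rw [zpow_neg, zpow_natCast, hNR, hsub, pow_sub₀ _ (by norm_num : (2:ℝ) ≠ 0) hle]
    rw [div_pow, one_pow, ← pow_mul, ← pow_mul]
    have h2 : ((2:ℝ)^((k-1)*m)) ≠ 0 := by positivity
    field_simp
  refine ⟨W, ?_, ?_, ?_⟩
  · intro i
    refine ⟨?_, ?_, ?_⟩
    · have hstep : Measurable (fun pr : Fin N × Fin N =>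
          if phi pr.1 pr.2 = i then (1:ℝ) else 0) := measurable_of_countable _
      have hmap : Measurable (fun xy : ℝ × ℝ => (pF xy.1, pF xy.2)) :=
        (hpFmeas.comp measurable_fst).prodMk (hpFmeas.comp measurable_snd)
      exact hstep.comp hmap
    · intro x y
      simp only [hW]
      rw [hphi_symm]
    · intro x y
      simp only [hW]
      split <;> norm_num
  · intro x y
    simp only [hW]
    rw [Finset.sum_ite_eq]
    simp
  · rw [htotal, hnum]
    exact hlt


end AuxNKC
end

/-- for a non-bipartite `H` with `c` components, if
`2^{−(k−1)(|H|−c)} < k^{−e(H)+1}` then `H` is not `k`-common; in particular a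
connected non-bipartite `H` of average degree `d = 2e(H)/|H|` is not
`⌈2d log₂ d⌉`-common, i.e. `κ(H) ≤ ⌈2d log₂ d⌉`. -/

theorem not_kCommon_of_nonbipartite {m : ℕ} (H : SimpleGraph (Fin m))
    [DecidableRel H.Adj] (hm : 0 < m) (hnb : ¬ H.Colorable 2)
    (c : ℕ) (hc : c = Nat.card H.ConnectedComponent) :
    (∀ k : ℕ, 2 ≤ k →
      (2 : ℝ) ^ (-(((k - 1) * (m - c) : ℕ) : ℤ)) <
          (k : ℝ) ^ (1 - (edgeCount H : ℤ)) →
      NotKCommon H k) ∧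
    (H.Connected → ∀ d : ℝ, d = 2 * (edgeCount H : ℝ) / m →
      NotKCommon H ⌈2 * d * Real.logb 2 d⌉₊) := by
  constructor
  · intro k hk hlt
    exact AuxNKC.notKCommon_main H hm hnb c hc hk hlt
  · intro hconn d hd
    have hem : m ≤ edgeCount H := AuxNKC.m_le_edgeCount H hm hconn hnb
    have hub : 2 * edgeCount H ≤ m * (m - 1) := AuxNKC.two_edgeCount_le H
    obtain ⟨hk2, hlt⟩ := AuxNKC.analytic (e := edgeCount H) hm hd hem hub rfl
    have hc1 : c = 1 := by
      rw [hc]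
      haveI : Nonempty H.ConnectedComponent := ⟨H.connectedComponentMk ⟨0, hm⟩⟩
      haveI : Subsingleton H.ConnectedComponent :=
        ⟨fun a b => SimpleGraph.ConnectedComponent.ind₂
          (fun u v => SimpleGraph.ConnectedComponent.sound (hconn.preconnected u v)) a b⟩
      exact Nat.card_eq_one_iff_unique.mpr ⟨inferInstance, inferInstance⟩
    subst hc1
    exact AuxNKC.notKCommon_main H hm hnb 1 hc hk2 hlt
end
end

section
/- Let λ₁ ≥ p₀ > 0, let π₀ = p₀²/2, let β:[0,1]→ℝ be measurable with ∫ β(x)² dx = λ₁² and λ₁² ≥ 2π₀, and let X₁ = {x : β(x)² ≥ π₀}. Then for every n ≥ 1, ∫_{X₁} β(x)^{2n+2} dx ≥ λ₁^{2n+2}. -/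
open MeasureTheory

noncomputable section

lemma aux_pow (m : ℝ) (hm0 : 0 ≤ m) (hm1 : m ≤ 1) (n : ℕ) (hn : 1 ≤ n) :
    m ^ n ≤ ((1 + m) / 2) ^ (n + 1) := by
  have ha : (0:ℝ) ≤ (1 + m) / 2 := by linarith
  have h1 : m ≤ ((1 + m) / 2) ^ 2 := by nlinarith
  refine le_of_pow_le_pow_left₀ two_ne_zero (pow_nonneg ha _) ?_
  calc (m ^ n) ^ 2 = m ^ (2 * n) := by rw [← pow_mul, mul_comm]
    _ ≤ m ^ (n + 1) := pow_le_pow_of_le_one hm0 hm1 (by omega)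
    _ ≤ (((1 + m) / 2) ^ 2) ^ (n + 1) := pow_le_pow_left₀ hm0 h1 _
    _ = (((1 + m) / 2) ^ (n + 1)) ^ 2 := by rw [← pow_mul, ← pow_mul, mul_comm]

/-- the concentration/convexity step: if `λ₁ ≥ p₀ > 0`,
`π₀ = p₀²/2 ≤ λ₁²/2`, `∫_{[0,1]} β² = λ₁²` and
`X₁ = {x : β(x)² ≥ π₀}`, then `∫_{X₁} β^{2n+2} ≥ λ₁^{2n+2}` for all `n ≥ 1`. -/
theorem concentration_step (p₀ lam1 pi0 : ℝ) (hp₀ : 0 < p₀) (hl : p₀ ≤ lam1)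
    (hpi : pi0 = p₀ ^ 2 / 2) (h2 : 2 * pi0 ≤ lam1 ^ 2)
    (β : ℝ → ℝ) (hβ : Measurable β)
    (hL2 : (∫ x in Set.Icc (0:ℝ) 1, β x ^ 2) = lam1 ^ 2)
    (hint : ∀ n : ℕ, IntegrableOn (fun x => β x ^ (2 * n + 2)) (Set.Icc (0:ℝ) 1)) :
    ∀ n : ℕ, 1 ≤ n →
      lam1 ^ (2 * n + 2) ≤
        ∫ x in {x ∈ Set.Icc (0:ℝ) 1 | pi0 ≤ β x ^ 2}, β x ^ (2 * n + 2) := by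
  intro n hn
  set S : Set ℝ := {x ∈ Set.Icc (0:ℝ) 1 | pi0 ≤ β x ^ 2} with hSdef
  have hpi0 : 0 < pi0 := by rw [hpi]; positivity
  have hlam : 0 < lam1 := lt_of_lt_of_le hp₀ hl
  have hSsub : S ⊆ Set.Icc (0:ℝ) 1 := fun x hx => hx.1
  have hSm : MeasurableSet S :=
    measurableSet_Icc.inter (measurableSet_le measurable_const (hβ.pow_const 2))
  have hvol1 : volume (Set.Icc (0:ℝ) 1) = 1 := by
    rw [Real.volume_Icc]; norm_num
  have hvS_le : volume S ≤ 1 := hvol1 ▸ measure_mono hSsub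
  have hvS_ne : volume S ≠ ⊤ := (lt_of_le_of_lt hvS_le ENNReal.one_lt_top).ne
  set m : ℝ := (volume S).toReal with hmdef
  have hm1 : m ≤ 1 := by
    rw [hmdef, ← ENNReal.toReal_one]
    exact ENNReal.toReal_mono ENNReal.one_ne_top hvS_le
  have hm0 : 0 ≤ m := ENNReal.toReal_nonneg
  -- integrability
  have hint2 : IntegrableOn (fun x => β x ^ 2) (Set.Icc (0:ℝ) 1) := by
    simpa using hint 0
  have hint2S : IntegrableOn (fun x => β x ^ 2) S := hint2.mono_set hSsub
  have hint2D : IntegrableOn (fun x => β x ^ 2) (Set.Icc (0:ℝ) 1 \ S) :=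
    hint2.mono_set Set.diff_subset
  have hintnS : IntegrableOn (fun x => β x ^ (2 * n + 2)) S := (hint n).mono_set hSsub
  -- splitting
  have hsplit : lam1 ^ 2 = (∫ x in S, β x ^ 2) + ∫ x in Set.Icc (0:ℝ) 1 \ S, β x ^ 2 := by
    rw [← hL2, ← setIntegral_union disjoint_sdiff_self_right (measurableSet_Icc.diff hSm)
      hint2S hint2D, Set.union_diff_cancel hSsub]
  have hdiffvol : (volume (Set.Icc (0:ℝ) 1 \ S)).toReal = 1 - m := by
    rw [measure_diff hSsub hSm.nullMeasurableSet hvS_ne, hvol1,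
      ENNReal.toReal_sub_of_le hvS_le ENNReal.one_ne_top]
    simp [hmdef]
  have hbound : (∫ x in Set.Icc (0:ℝ) 1 \ S, β x ^ 2) ≤ pi0 * (1 - m) := by
    calc (∫ x in Set.Icc (0:ℝ) 1 \ S, β x ^ 2)
        ≤ ∫ _x in Set.Icc (0:ℝ) 1 \ S, pi0 := by
          refine setIntegral_mono_on hint2D (integrableOn_const (ne_of_lt ?_))
            (measurableSet_Icc.diff hSm) (fun x hx => ?_)
          · exact lt_of_le_of_lt (measure_mono Set.diff_subset) (hvol1 ▸ ENNReal.one_lt_top)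
          · have := hx.2
            by_contra hc
            exact this ⟨hx.1, le_of_not_ge hc⟩
      _ = pi0 * (1 - m) := by rw [setIntegral_const, measureReal_def, hdiffvol, smul_eq_mul, mul_comm]
  set I : ℝ := ∫ x in S, β x ^ 2 with hIdef
  have hkey : lam1 ^ 2 - (1 - m) * pi0 ≤ I := by
    rw [hsplit]; nlinarith [hbound]
  have hlow : lam1 ^ 2 * ((1 + m) / 2) ≤ I := by nlinarith
  have hIpos : 0 < I := lt_of_lt_of_le (by nlinarith) hlow
  -- positivity of the measure
  have hvS0 : volume S ≠ 0 := by
    intro h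
    rw [hIdef, Measure.restrict_eq_zero.2 h] at hIpos
    simp at hIpos
  have hmpos : 0 < m := ENNReal.toReal_pos hvS0 hvS_ne
  -- Jensen
  haveI : IsFiniteMeasure (volume.restrict S) :=
    ⟨by rw [Measure.restrict_apply_univ]; exact lt_of_le_of_lt hvS_le ENNReal.one_lt_top⟩
  haveI : NeZero (volume.restrict S) := ⟨fun h => hvS0 (Measure.restrict_eq_zero.1 h)⟩
  have hcomp : ∀ x : ℝ, (fun t : ℝ => t ^ (n + 1)) (β x ^ 2) = β x ^ (2 * n + 2) := by
    intro x
    show (β x ^ 2) ^ (n + 1) = β x ^ (2 * n + 2)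
    rw [← pow_mul, Nat.mul_succ]
  have hjensen := ConvexOn.map_average_le (μ := volume.restrict S)
    (f := fun x => β x ^ 2) (g := fun t : ℝ => t ^ (n + 1))
    (convexOn_pow (n + 1)) (continuous_pow (n + 1)).continuousOn isClosed_Ici
    (Filter.Eventually.of_forall fun x => sq_nonneg (β x)) hint2S
    (by
      have he : ((fun t : ℝ => t ^ (n + 1)) ∘ fun x => β x ^ 2)
          = fun x => β x ^ (2 * n + 2) := funext hcomp
      rw [he]; exact hintnS)
  rw [average_eq, average_eq, measureReal_def, Measure.restrict_apply_univ] at hjensen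
  simp only [smul_eq_mul] at hjensen
  set J : ℝ := ∫ x in S, β x ^ (2 * n + 2) with hJdef
  have hjensen' : (m⁻¹ * I) ^ (n + 1) ≤ m⁻¹ * J := by
    have : (∫ x in S, β x ^ 2 ∂volume) = I := rfl
    calc (m⁻¹ * I) ^ (n + 1) ≤ m⁻¹ * ∫ x in S, (β x ^ 2) ^ (n + 1) ∂volume := hjensen
      _ = m⁻¹ * J := by
        congr 1
        refine setIntegral_congr_fun hSm fun x _ => ?_
        rw [← pow_mul, Nat.mul_succ]
  -- arithmetic conclusion
  have hJ : I ^ (n + 1) / m ^ n ≤ J := by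
    have h1 : m * (m⁻¹ * I) ^ (n + 1) ≤ J := by
      calc m * (m⁻¹ * I) ^ (n + 1) ≤ m * (m⁻¹ * J) := by
            exact mul_le_mul_of_nonneg_left hjensen' hm0
        _ = J := by field_simp
    calc I ^ (n + 1) / m ^ n = m * (m⁻¹ * I) ^ (n + 1) := by
          rw [mul_pow, inv_pow]
          field_simp
          ring
      _ ≤ J := h1
  have hfin : lam1 ^ (2 * n + 2) ≤ I ^ (n + 1) / m ^ n := by
    rw [le_div_iff₀ (pow_pos hmpos n)]
    calc lam1 ^ (2 * n + 2) * m ^ n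
        ≤ lam1 ^ (2 * n + 2) * ((1 + m) / 2) ^ (n + 1) := by
          exact mul_le_mul_of_nonneg_left (aux_pow m hm0 hm1 n hn) (by positivity)
      _ = (lam1 ^ 2 * ((1 + m) / 2)) ^ (n + 1) := by
          rw [mul_pow, ← pow_mul, Nat.mul_succ]
      _ ≤ I ^ (n + 1) := pow_le_pow_left₀ (by positivity) hlow _
  exact le_trans hfin hJ

end
end
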